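/- Let n ≥ 1 and let L : ℝⁿ → ℝ be differentiable, strictly convex and superlinear. Then the gradient map ℝⁿ → ℝⁿ, v ↦ ∇L(v), is a bijection of ℝⁿ onto ℝⁿ. -/

import Mathlib

open Filter
open scoped RealInnerProductSpace

section Aux

variable {E : Type*} [NormedAddCommGroup E] [InnerProductSpace ℝ E] [CompleteSpace E]

lemma inner_gradient_apply' (f : E → ℝ) (x v : E) :
    ⟪gradient f x, v⟫ = fderiv ℝ f x v := by
  rw [gradient, InnerProductSpace.toDual_symm_apply]

/-- Strict subgradient inequality for a strictly convex differentiable function. -/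
lemma strict_grad_ineq {f : E → ℝ} (hdiff : Differentiable ℝ f)
    (hconv : StrictConvexOn ℝ Set.univ f) {x y : E} (hxy : x ≠ y) :
    f x + ⟪gradient f x, y - x⟫ < f y := by
  set g : ℝ → ℝ := fun t => f (AffineMap.lineMap x y t) with hgdef
  have hline : ∀ t : ℝ, HasDerivAt g (fderiv ℝ f (AffineMap.lineMap x y t) (y - x)) t := by
    intro t
    have h1 : HasDerivAt (fun t : ℝ => AffineMap.lineMap x y t) (y - x) t := by
      simp only [AffineMap.lineMap_apply, vsub_eq_sub, vadd_eq_add]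
      simpa using ((hasDerivAt_id t).smul_const (y - x)).add_const x
    exact (hdiff _).hasFDerivAt.comp_hasDerivAt t h1
  have hgconv : ConvexOn ℝ Set.univ g := by
    have := hconv.convexOn.comp_affineMap (AffineMap.lineMap x y)
    exact this
  have hg0 : g 0 = f x := by simp [hgdef]
  have hg1 : g 1 = f y := by simp [hgdef]
  have hghalf : g (1/2) < (f x + f y) / 2 := by
    have hmem : AffineMap.lineMap x y (1/2 : ℝ) = (1/2 : ℝ) • x + (1/2 : ℝ) • y := by
      rw [AffineMap.lineMap_apply]
      simp only [vsub_eq_sub, vadd_eq_add]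
      module
    have := hconv.2 (Set.mem_univ x) (Set.mem_univ y) hxy (by norm_num : (0:ℝ) < 1/2)
      (by norm_num : (0:ℝ) < 1/2) (by norm_num)
    rw [hgdef]
    simp only [hmem]
    calc f ((1/2 : ℝ) • x + (1/2 : ℝ) • y) < (1/2) * f x + (1/2) * f y := this
    _ = (f x + f y) / 2 := by ring
  have hslope := hgconv.le_slope_of_hasDerivAt (Set.mem_univ (0:ℝ)) (Set.mem_univ (1/2 : ℝ))
    (by norm_num) (hline 0)
  rw [slope_def_field] at hslope
  have hd0 : fderiv ℝ f (AffineMap.lineMap x y (0:ℝ)) (y - x) = ⟪gradient f x, y - x⟫ := by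
    rw [inner_gradient_apply']
    simp
  rw [hd0] at hslope
  have : (g (1/2) - g 0) / (1/2 - 0) = 2 * (g (1/2) - g 0) := by ring
  rw [this] at hslope
  linarith [hg0, hg1]

end Aux

/-- The gradient map of a differentiable, strictly convex, superlinear function
on ℝⁿ is a bijection of ℝⁿ onto ℝⁿ (the fibrewise Legendre transform). -/
theorem gradient_bijective_of_strictConvex_superlinear (n : ℕ) (hn : 1 ≤ n)
    (L : EuclideanSpace ℝ (Fin n) → ℝ)
    (hdiff : Differentiable ℝ L)
    (hconv : StrictConvexOn ℝ Set.univ L)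
    (hsl : Tendsto (fun v => L v / ‖v‖)
      (comap (fun v : EuclideanSpace ℝ (Fin n) => ‖v‖) atTop) atTop) :
    Function.Bijective (fun v : EuclideanSpace ℝ (Fin n) => gradient L v) := by
  constructor
  · -- injectivity
    intro a b hab
    simp only at hab
    by_contra hne
    have h1 := strict_grad_ineq hdiff hconv hne
    have h2 := strict_grad_ineq hdiff hconv (Ne.symm hne)
    rw [hab] at h1
    have h3 : ⟪gradient L b, b - a⟫ + ⟪gradient L b, a - b⟫ = 0 := by
      rw [← inner_add_right]
      simp
    linarith
  · -- surjectivity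
    intro p
    set f : EuclideanSpace ℝ (Fin n) → ℝ := fun v => L v - (innerSL ℝ p) v with hfdef
    have hfdiff : Differentiable ℝ f := hdiff.sub (innerSL ℝ p).differentiable
    have hcoc : Tendsto f (cocompact (EuclideanSpace ℝ (Fin n))) atTop := by
      have hnorm : Tendsto (fun v : EuclideanSpace ℝ (Fin n) => ‖v‖) (cocompact (EuclideanSpace ℝ (Fin n))) atTop :=
        tendsto_norm_cocompact_atTop
      have hid : Tendsto (fun v : EuclideanSpace ℝ (Fin n) => v) (cocompact (EuclideanSpace ℝ (Fin n)))
          (comap (fun v : EuclideanSpace ℝ (Fin n) => ‖v‖) atTop) := by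
        rw [tendsto_comap_iff]
        exact hnorm
      have hsl' : Tendsto (fun v : EuclideanSpace ℝ (Fin n) => L v / ‖v‖) (cocompact (EuclideanSpace ℝ (Fin n))) atTop := hsl.comp hid
      rw [tendsto_atTop]
      intro b
      filter_upwards [hnorm.eventually_ge_atTop 1,
        hsl'.eventually_ge_atTop (‖p‖ + max b 0)] with v hv1 hv2
      have hv0 : ‖v‖ ≠ 0 := by positivity
      have hLv : L v = (L v / ‖v‖) * ‖v‖ := (div_mul_cancel₀ _ hv0).symm
      have hip : ⟪p, v⟫ ≤ ‖p‖ * ‖v‖ := real_inner_le_norm p v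
      have hb : b ≤ max b 0 := le_max_left _ _
      have hb0 : (0:ℝ) ≤ max b 0 := le_max_right _ _
      show b ≤ L v - (innerSL ℝ p) v
      rw [innerSL_apply_apply]
      nlinarith [mul_le_mul_of_nonneg_right hv2 (by positivity : (0:ℝ) ≤ ‖v‖)]
    obtain ⟨a, ha⟩ := hfdiff.continuous.exists_forall_le hcoc
    have hmin : IsLocalMin f a := Filter.Eventually.of_forall ha
    have hF : HasFDerivAt f (fderiv ℝ L a - innerSL ℝ p) a :=
      (hdiff a).hasFDerivAt.sub (innerSL ℝ p).hasFDerivAt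
    have h0 : fderiv ℝ L a - innerSL ℝ p = 0 := hmin.hasFDerivAt_eq_zero hF
    have heq : fderiv ℝ L a = innerSL ℝ p := by rwa [sub_eq_zero] at h0
    refine ⟨a, ?_⟩
    have hG : HasGradientAt L p a := by
      rw [hasGradientAt_iff_hasFDerivAt]
      have : InnerProductSpace.toDual ℝ (EuclideanSpace ℝ (Fin n)) p = innerSL ℝ p := by
        ext y
        simp [InnerProductSpace.toDual_apply_apply]
      rw [this, ← heq]
      exact (hdiff a).hasFDerivAt
    exact hG.gradient
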